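/- arXiv:1111.3304 — 3 statements merged into one kernel-verified Lean document; each statement's English description precedes it below -/
import Mathlib

section
/- With the setup of the previous statement, the matrix 𝓗 = D^{-1} H satisfies 𝓗 = Υ (D^{-1} 𝓐) Υ^{-1}, where Υ is the 3N×3N block-diagonal matrix with blocks h_1,...,h_N and 𝓐 = A^P ⊗ I_3. Consequently 𝓗 and D^{-1}𝓐 have the same eigenvalues, and every eigenvalue of 𝓗 is an eigenvalue of Δ^{-1} A^P (with multiplicity 3). -/
open Matrix BigOperators Kronecker

lemma sum_sum_ite {α β M : Type*} [Fintype α] [Fintype β] [AddCommMonoid M] [DecidableEq α]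
    (a : α) (f : α → β → M) :
    ∑ x : α, ∑ y : β, (if a = x then f x y else 0) = ∑ y, f a y := by
  rw [Finset.sum_comm]; simp

/-- With `H` the block matrix with blocks `h_i h_jᵀ` on edges of `G^P` (zero
otherwise), `D = Δ ⊗ I₃` the block degree matrix, `Υ` the block diagonal matrix with blocks
`h_1,...,h_N`, and `𝓐 = A^P ⊗ I₃`, we have `D⁻¹H = Υ (D⁻¹𝓐) Υ⁻¹`; consequently every
eigenvalue of `𝓗 = D⁻¹H` is an eigenvalue of `D⁻¹𝓐`, hence of `Δ⁻¹A^P` (with multiplicity 3). -/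
theorem stmt_5 (N : ℕ) (G : SimpleGraph (Fin N)) [DecidableRel G.Adj]
    (hdeg : ∀ i, 0 < G.degree i)
    (h : Fin N → Matrix (Fin 3) (Fin 3) ℝ)
    (horth : ∀ i, (h i)ᵀ * h i = 1)
    (H : Matrix (Fin N × Fin 3) (Fin N × Fin 3) ℝ)
    (hH : ∀ p q, H p q = if G.Adj p.1 q.1 then (h p.1 * (h q.1)ᵀ) p.2 q.2 else 0)
    (AP : Matrix (Fin N) (Fin N) ℝ)
    (hAP : ∀ i j, AP i j = if G.Adj i j then 1 else 0)
    (Dinv : Matrix (Fin N × Fin 3) (Fin N × Fin 3) ℝ)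
    (hD : Dinv = Matrix.diagonal fun p => ((G.degree p.1 : ℝ))⁻¹)
    (Δinv : Matrix (Fin N) (Fin N) ℝ)
    (hΔ : Δinv = Matrix.diagonal fun i => ((G.degree i : ℝ))⁻¹)
    (Υ : Matrix (Fin N × Fin 3) (Fin N × Fin 3) ℝ)
    (hΥ : ∀ p q, Υ p q = if p.1 = q.1 then h p.1 p.2 q.2 else 0) :
    Dinv * H = Υ * (Dinv * (AP ⊗ₖ (1 : Matrix (Fin 3) (Fin 3) ℝ))) * Υ⁻¹
    ∧ ∀ (mu : ℝ) (v : Fin N × Fin 3 → ℝ), v ≠ 0 → (Dinv * H) *ᵥ v = mu • v →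
        (∃ w : Fin N × Fin 3 → ℝ, w ≠ 0 ∧
            (Dinv * (AP ⊗ₖ (1 : Matrix (Fin 3) (Fin 3) ℝ))) *ᵥ w = mu • w)
        ∧ ∃ u : Fin N → ℝ, u ≠ 0 ∧ (Δinv * AP) *ᵥ u = mu • u := by
  set 𝓐 : Matrix (Fin N × Fin 3) (Fin N × Fin 3) ℝ := AP ⊗ₖ (1 : Matrix (Fin 3) (Fin 3) ℝ)
    with h𝓐
  -- Υᵀ Υ = 1
  have hUtU : Υᵀ * Υ = 1 := by
    ext ⟨i,a⟩ ⟨j,b⟩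
    simp only [Matrix.mul_apply, Matrix.transpose_apply, hΥ]
    rw [Fintype.sum_prod_type]
    simp only [ite_mul, zero_mul, mul_ite, mul_zero]
    rw [Finset.sum_comm]
    simp only [Finset.sum_ite_eq', Finset.mem_univ, if_true]
    by_cases hij : i = j
    · subst hij
      simp only [if_pos rfl]
      have := congrArg (fun M => M a b) (horth i)
      simpa [Matrix.mul_apply, Matrix.one_apply, Prod.ext_iff] using this
    · simp [hij, Matrix.one_apply, Prod.ext_iff]
      exact fun h' => absurd h'.symm hij
  have hUUt : Υ * Υᵀ = 1 := mul_eq_one_comm.mp hUtU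
  have hinv : Υ⁻¹ = Υᵀ := Matrix.inv_eq_right_inv hUUt
  -- H = Υ 𝓐 Υᵀ
  have hHfact : H = Υ * 𝓐 * Υᵀ := by
    ext ⟨i,a⟩ ⟨j,b⟩
    simp only [h𝓐, Matrix.mul_apply, Matrix.transpose_apply, hΥ, Matrix.kroneckerMap_apply]
    rw [Fintype.sum_prod_type]
    simp only [Fintype.sum_prod_type, ite_mul, zero_mul, mul_ite, mul_zero, sum_sum_ite]
    simp only [Matrix.one_apply, mul_ite, mul_one, mul_zero, ite_mul, zero_mul,
      Finset.sum_ite_eq', Finset.mem_univ, if_true]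
    rw [hH, hAP]
    by_cases hadj : G.Adj i j
    · simp [hadj, Matrix.mul_apply, Finset.sum_mul, mul_comm, mul_assoc, mul_left_comm]
    · simp [hadj]
  -- Dinv commutes with Υ
  have hcomm : Dinv * Υ = Υ * Dinv := by
    ext ⟨i,a⟩ ⟨j,b⟩
    rw [hD]
    simp only [Matrix.diagonal_mul, Matrix.mul_diagonal, hΥ]
    by_cases hij : i = j
    · subst hij; ring
    · simp [hij]
  have main : Dinv * H = Υ * (Dinv * 𝓐) * Υ⁻¹ := by
    rw [hinv, hHfact]
    simp only [← Matrix.mul_assoc]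
    rw [← hcomm]
  refine ⟨main, ?_⟩
  intro mu v hv hev
  set w : Fin N × Fin 3 → ℝ := Υᵀ *ᵥ v with hw
  have hvw : Υ *ᵥ w = v := by
    rw [hw, Matrix.mulVec_mulVec, hUUt, Matrix.one_mulVec]
  have hwne : w ≠ 0 := by
    intro h0
    apply hv
    rw [← hvw, h0, Matrix.mulVec_zero]
  have hkey : (Dinv * 𝓐) *ᵥ w = mu • w := by
    have : Υᵀ * (Dinv * H) = (Dinv * 𝓐) * Υᵀ := by
      rw [main, hinv]
      simp only [← Matrix.mul_assoc, hUtU, Matrix.one_mul]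
    calc (Dinv * 𝓐) *ᵥ w = ((Dinv * 𝓐) * Υᵀ) *ᵥ v := by
          rw [hw, Matrix.mulVec_mulVec]
      _ = (Υᵀ * (Dinv * H)) *ᵥ v := by rw [this]
      _ = Υᵀ *ᵥ ((Dinv * H) *ᵥ v) := by rw [Matrix.mulVec_mulVec]
      _ = Υᵀ *ᵥ (mu • v) := by rw [hev]
      _ = mu • w := by rw [Matrix.mulVec_smul, hw]
  refine ⟨⟨w, hwne, hkey⟩, ?_⟩
  obtain ⟨⟨i0, k0⟩, hp⟩ := Function.ne_iff.mp hwne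
  refine ⟨fun i => w (i, k0), ?_, ?_⟩
  · intro h0
    exact hp (congrFun h0 i0)
  · funext i
    have hcomp : ((Δinv * AP) *ᵥ (fun i => w (i, k0))) i = ((Dinv * 𝓐) *ᵥ w) (i, k0) := by
      simp only [Matrix.mulVec, dotProduct, hD, hΔ, h𝓐,
        Matrix.diagonal_mul, Matrix.kroneckerMap_apply]
      rw [Fintype.sum_prod_type]
      simp only [Matrix.one_apply, mul_ite, mul_one, mul_zero, ite_mul, zero_mul,
        Finset.sum_ite_eq, Finset.mem_univ, if_true]
    rw [hcomp, hkey]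
    simp
end

section
/- If the graph G^P is connected, then the eigenvalue 1 of 𝓗 = D^{-1}H has multiplicity exactly 3, and all other eigenvalues of 𝓗 are strictly less than 1. -/
open Matrix BigOperators

/-- If `G^P` is connected (N ≥ 2, positive degrees), the eigenvalue 1 of
`𝓗 = D⁻¹H` has multiplicity exactly 3 (its eigenspace is 3-dimensional) and every other
eigenvalue of `𝓗` is strictly less than 1. -/
theorem stmt_6 (N : ℕ) (hN : 2 ≤ N) (G : SimpleGraph (Fin N)) [DecidableRel G.Adj]
    (hconn : G.Connected) (hdeg : ∀ i, 0 < G.degree i)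
    (h : Fin N → Matrix (Fin 3) (Fin 3) ℝ)
    (horth : ∀ i, (h i)ᵀ * h i = 1)
    (H : Matrix (Fin N × Fin 3) (Fin N × Fin 3) ℝ)
    (hH : ∀ p q, H p q = if G.Adj p.1 q.1 then (h p.1 * (h q.1)ᵀ) p.2 q.2 else 0)
    (Dinv : Matrix (Fin N × Fin 3) (Fin N × Fin 3) ℝ)
    (hD : Dinv = Matrix.diagonal fun p => ((G.degree p.1 : ℝ))⁻¹) :
    Module.finrank ℝ (LinearMap.ker ((Dinv * H - 1).mulVecLin)) = 3
    ∧ ∀ (mu : ℝ) (v : Fin N × Fin 3 → ℝ), v ≠ 0 → (Dinv * H) *ᵥ v = mu • v →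
        mu ≠ 1 → mu < 1 := by
  have i0 : Fin N := ⟨0, by omega⟩
  have hdeg' : ∀ i, (G.degree i : ℝ) ≠ 0 := fun i => Nat.cast_ne_zero.mpr (hdeg i).ne'
  have hdegpos : ∀ i, (0:ℝ) < (G.degree i : ℝ) := fun i => by exact_mod_cast hdeg i
  -- pointwise orthogonality, both orders
  have horth' : ∀ i c d, (∑ b, h i b c * h i b d) = if c = d then (1:ℝ) else 0 := by
    intro i c d
    have := congrFun (congrFun (horth i) c) d
    simpa [Matrix.mul_apply, Matrix.transpose_apply, Matrix.one_apply] using this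
  have hright : ∀ i a b, (∑ c, h i a c * h i b c) = if a = b then (1:ℝ) else 0 := by
    intro i a b
    have h1 : h i * (h i)ᵀ = 1 := mul_eq_one_comm.mp (horth i)
    have := congrFun (congrFun h1 a) b
    simpa [Matrix.mul_apply, Matrix.transpose_apply, Matrix.one_apply] using this
  -- collapsing sums
  have collapse : ∀ (i : Fin N) (c : Fin 3) (S : Fin 3 → ℝ),
      (∑ b, h i b c * ∑ d, h i b d * S d) = S c := by
    intro i c S
    calc ∑ b, h i b c * ∑ d, h i b d * S d
        = ∑ b, ∑ d, (h i b c * h i b d) * S d := Finset.sum_congr rfl fun b _ => by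
          rw [Finset.mul_sum]
          exact Finset.sum_congr rfl fun d _ => (mul_assoc _ _ _).symm
      _ = ∑ d, ∑ b, (h i b c * h i b d) * S d := Finset.sum_comm
      _ = ∑ d, (∑ b, h i b c * h i b d) * S d :=
          Finset.sum_congr rfl fun d _ => (Finset.sum_mul _ _ _).symm
      _ = S c := by simp [horth']
  have recov : ∀ (i : Fin N) (a : Fin 3) (x : Fin 3 → ℝ),
      (∑ c, h i a c * ∑ b, h i b c * x b) = x a := by
    intro i a x
    calc ∑ c, h i a c * ∑ b, h i b c * x b
        = ∑ c, ∑ b, (h i a c * h i b c) * x b := Finset.sum_congr rfl fun c _ => by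
          rw [Finset.mul_sum]
          exact Finset.sum_congr rfl fun b _ => (mul_assoc _ _ _).symm
      _ = ∑ b, ∑ c, (h i a c * h i b c) * x b := Finset.sum_comm
      _ = ∑ b, (∑ c, h i a c * h i b c) * x b :=
          Finset.sum_congr rfl fun b _ => (Finset.sum_mul _ _ _).symm
      _ = x a := by simp [hright]
  -- indicator sums are neighborhood sums
  have sum_nbr : ∀ (x : Fin N → ℝ) (i : Fin N),
      (∑ j, if G.Adj i j then x j else 0) = ∑ j ∈ G.neighborFinset i, x j := by
    intro x i
    rw [SimpleGraph.neighborFinset_eq_filter, Finset.sum_filter]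
  -- the key computation for the action of Dinv * H
  have key : ∀ (v : Fin N × Fin 3 → ℝ) (i : Fin N) (a : Fin 3),
      ((Dinv * H) *ᵥ v) (i, a) = (G.degree i : ℝ)⁻¹ *
        ∑ j : Fin N, (if G.Adj i j then
          ∑ d : Fin 3, h i a d * (∑ b : Fin 3, h j b d * v (j, b)) else 0) := by
    intro v i a
    rw [← mulVec_mulVec, hD, mulVec_diagonal]
    congr 1
    have : (H *ᵥ v) (i, a) = ∑ p : Fin N × Fin 3, H (i, a) p * v p := by
      simp [mulVec, dotProduct]
    rw [this, Fintype.sum_prod_type]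
    refine Finset.sum_congr rfl fun j _ => ?_
    by_cases hij : G.Adj i j
    · simp only [hH, hij, if_true, Matrix.mul_apply, Matrix.transpose_apply]
      simp only [Finset.sum_mul, Finset.mul_sum, mul_assoc]
      exact Finset.sum_comm
    · simp [hH, hij]
  -- the projected ("w") equation
  have wkey : ∀ (v u : Fin N × Fin 3 → ℝ), (Dinv * H) *ᵥ v = u →
      ∀ (i : Fin N) (c : Fin 3),
      (∑ b, h i b c * u (i, b)) = (G.degree i : ℝ)⁻¹ *
        ∑ j : Fin N, (if G.Adj i j then (∑ b, h j b c * v (j, b)) else 0) := by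
    intro v u hu i c
    subst hu
    calc ∑ b, h i b c * ((Dinv * H) *ᵥ v) (i, b)
        = (G.degree i : ℝ)⁻¹ * ∑ b, h i b c *
            ∑ j : Fin N, (if G.Adj i j then
              ∑ d : Fin 3, h i b d * (∑ e : Fin 3, h j e d * v (j, e)) else 0) := by
          rw [Finset.mul_sum]
          exact Finset.sum_congr rfl fun b _ => by rw [key]; ring
      _ = _ := by
          congr 1
          calc ∑ b, h i b c * ∑ j : Fin N, (if G.Adj i j then
                  ∑ d : Fin 3, h i b d * (∑ e : Fin 3, h j e d * v (j, e)) else 0)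
              = ∑ b, ∑ j : Fin N, h i b c * (if G.Adj i j then
                  ∑ d : Fin 3, h i b d * (∑ e : Fin 3, h j e d * v (j, e)) else 0) :=
                Finset.sum_congr rfl fun b _ => Finset.mul_sum _ _ _
            _ = ∑ j : Fin N, ∑ b, h i b c * (if G.Adj i j then
                  ∑ d : Fin 3, h i b d * (∑ e : Fin 3, h j e d * v (j, e)) else 0) :=
                Finset.sum_comm
            _ = _ := by
                refine Finset.sum_congr rfl fun j _ => ?_
                by_cases hij : G.Adj i j
                · simp only [hij, if_true]
                  exact collapse i c _
                · simp [hij]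
  constructor
  · -- Part 1: eigenspace of eigenvalue 1 has dimension 3
    -- the linear map embedding (Fin 3 → ℝ) as the eigenspace
    let φ : (Fin 3 → ℝ) →ₗ[ℝ] (Fin N × Fin 3 → ℝ) :=
      { toFun := fun c p => ∑ b, h p.1 p.2 b * c b
        map_add' := by
          intro x y; funext p; simp [mul_add, Finset.sum_add_distrib]
        map_smul' := by
          intro r x; funext p
          simp [Finset.mul_sum, mul_left_comm] }
    have hφ : ∀ (c : Fin 3 → ℝ) (p : Fin N × Fin 3), φ c p = ∑ b, h p.1 p.2 b * c b :=
      fun _ _ => rfl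
    have hinj : Function.Injective φ := by
      rw [injective_iff_map_eq_zero]
      intro c hc
      funext d
      have h0 : ∀ a, (∑ b, h i0 a b * c b) = 0 := fun a => congrFun hc (i0, a)
      have := collapse i0 d (fun b => c b)
      calc c d = ∑ a, h i0 a d * ∑ b, h i0 a b * c b := this.symm
        _ = 0 := by simp [h0]
    -- a constant multiple sum over neighbors
    have const_nbr : ∀ (i : Fin N) (K : ℝ),
        (∑ j : Fin N, if G.Adj i j then K else 0) = (G.degree i : ℝ) * K := by
      intro i K
      rw [sum_nbr (fun _ => K) i, Finset.sum_const, SimpleGraph.card_neighborFinset_eq_degree,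
        nsmul_eq_mul]
    have hker : LinearMap.ker ((Dinv * H - 1).mulVecLin) = LinearMap.range φ := by
      ext v
      simp only [LinearMap.mem_ker, LinearMap.mem_range, Matrix.mulVecLin_apply,
        Matrix.sub_mulVec, Matrix.one_mulVec, sub_eq_zero]
      constructor
      · intro hv
        -- v is harmonic; its projections are constant by connectivity
        set w : Fin N → Fin 3 → ℝ := fun j c => ∑ b, h j b c * v (j, b) with hw
        have weq : ∀ (i : Fin N) (c : Fin 3),
            (G.degree i : ℝ) * w i c = ∑ j ∈ G.neighborFinset i, w j c := by
          intro i c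
          have hwic : w i c = (G.degree i : ℝ)⁻¹ *
              ∑ j : Fin N, (if G.Adj i j then w j c else 0) := wkey v v hv i c
          rw [hwic, mul_inv_cancel_left₀ (hdeg' i)]
          exact sum_nbr (fun j => w j c) i
        have hconst : ∀ (c : Fin 3) (i : Fin N), w i c = w i0 c := by
          intro c i
          have hz : Matrix.toLin' (G.lapMatrix ℝ) (fun j => w j c) = 0 := by
            rw [Matrix.toLin'_apply]
            funext i
            rw [SimpleGraph.lapMatrix_mulVec_apply]
            have := weq i c
            simp only [Pi.zero_apply]
            linarith [weq i c]
          exact (SimpleGraph.lapMatrix_mulVec_eq_zero_iff_forall_reachable G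
            (x := fun j => w j c)).mp hz i i0 (hconn.preconnected i i0)
        refine ⟨fun c => w i0 c, ?_⟩
        funext p
        obtain ⟨i, a⟩ := p
        rw [hφ]
        simp only
        calc (∑ b, h i a b * w i0 b)
            = (G.degree i : ℝ)⁻¹ * ((G.degree i : ℝ) * ∑ d, h i a d * w i0 d) :=
              (inv_mul_cancel_left₀ (hdeg' i) _).symm
          _ = (G.degree i : ℝ)⁻¹ *
              ∑ j : Fin N, (if G.Adj i j then ∑ d, h i a d * w i0 d else 0) := by
              rw [const_nbr]
          _ = (G.degree i : ℝ)⁻¹ *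
              ∑ j : Fin N, (if G.Adj i j then
                ∑ d : Fin 3, h i a d * (∑ b : Fin 3, h j b d * v (j, b)) else 0) := by
              congr 1
              refine Finset.sum_congr rfl fun j _ => ?_
              by_cases hij : G.Adj i j
              · simp only [hij, if_true]
                refine Finset.sum_congr rfl fun d _ => ?_
                rw [show (∑ b : Fin 3, h j b d * v (j, b)) = w j d from rfl, hconst d j]
              · simp [hij]
          _ = ((Dinv * H) *ᵥ v) (i, a) := (key v i a).symm
          _ = v (i, a) := congrFun hv (i, a)
      · rintro ⟨c, rfl⟩
        funext p
        obtain ⟨i, a⟩ := p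
        rw [key]
        have : ∀ j, (∑ d : Fin 3, h i a d * (∑ b : Fin 3, h j b d * φ c (j, b)))
            = ∑ d, h i a d * c d := by
          intro j
          refine Finset.sum_congr rfl fun d _ => ?_
          congr 1
          calc (∑ b : Fin 3, h j b d * φ c (j, b))
              = ∑ b, h j b d * ∑ e, h j b e * c e := rfl
            _ = c d := collapse j d c
        calc (G.degree i : ℝ)⁻¹ * ∑ j : Fin N, (if G.Adj i j then
                ∑ d : Fin 3, h i a d * (∑ b : Fin 3, h j b d * φ c (j, b)) else 0)
            = (G.degree i : ℝ)⁻¹ * ∑ j : Fin N,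
                (if G.Adj i j then ∑ d, h i a d * c d else 0) := by
              congr 1
              refine Finset.sum_congr rfl fun j _ => ?_
              by_cases hij : G.Adj i j <;> simp [hij, this j]
          _ = (G.degree i : ℝ)⁻¹ * ((G.degree i : ℝ) * ∑ d, h i a d * c d) := by
              rw [const_nbr]
          _ = φ c (i, a) := by rw [hφ]; exact inv_mul_cancel_left₀ (hdeg' i) _
    rw [hker, LinearMap.finrank_range_of_inj hinj]
    simp [Module.finrank_fin_fun]
  · -- Part 2: all other eigenvalues are < 1
    intro mu v hv0 hv hmu
    refine lt_of_le_of_ne ?_ hmu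
    set w : Fin N → Fin 3 → ℝ := fun j c => ∑ b, h j b c * v (j, b) with hw
    -- w is nonzero
    have hwne : ∃ q : Fin N × Fin 3, w q.1 q.2 ≠ 0 := by
      by_contra hcon
      push_neg at hcon
      apply hv0
      funext p
      obtain ⟨i, a⟩ := p
      have := recov i a (fun b => v (i, b))
      calc v (i, a) = ∑ c, h i a c * ∑ b, h i b c * v (i, b) := this.symm
        _ = ∑ c, h i a c * w i c := rfl
        _ = 0 := by
            refine Finset.sum_eq_zero fun c _ => ?_
            rw [hcon (i, c)]
            ring
    -- the projected eigenvalue equation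
    have weq : ∀ (i : Fin N) (c : Fin 3),
        mu * w i c = (G.degree i : ℝ)⁻¹ * ∑ j ∈ G.neighborFinset i, w j c := by
      intro i c
      have := wkey v (mu • v) hv i c
      rw [← sum_nbr (fun j => w j c) i]
      calc mu * w i c = ∑ b, h i b c * (mu • v) (i, b) := by
            simp only [Pi.smul_apply, smul_eq_mul]
            rw [hw, Finset.mul_sum]
            exact Finset.sum_congr rfl fun b _ => by ring
        _ = _ := by rw [this]
    -- take the maximizing entry
    obtain ⟨p, -, hp⟩ := Finset.exists_max_image (Finset.univ : Finset (Fin N × Fin 3))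
      (fun q => |w q.1 q.2|) ⟨(i0, 0), Finset.mem_univ _⟩
    obtain ⟨q, hq⟩ := hwne
    have hM : 0 < |w p.1 p.2| := lt_of_lt_of_le (abs_pos.mpr hq) (hp q (Finset.mem_univ q))
    set M := |w p.1 p.2| with hMdef
    have hineq : |mu| * M ≤ M := by
      have h1 : |mu| * M = |mu * w p.1 p.2| := (abs_mul mu _).symm
      rw [h1, weq p.1 p.2, abs_mul, abs_inv, abs_of_pos (hdegpos p.1)]
      have h2 : |∑ j ∈ G.neighborFinset p.1, w j p.2| ≤ (G.degree p.1 : ℝ) * M := by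
        calc |∑ j ∈ G.neighborFinset p.1, w j p.2|
            ≤ ∑ j ∈ G.neighborFinset p.1, |w j p.2| := Finset.abs_sum_le_sum_abs _ _
          _ ≤ ∑ j ∈ G.neighborFinset p.1, M :=
              Finset.sum_le_sum fun j _ => hp (j, p.2) (Finset.mem_univ _)
          _ = (G.degree p.1 : ℝ) * M := by
              rw [Finset.sum_const, SimpleGraph.card_neighborFinset_eq_degree, nsmul_eq_mul]
      calc (G.degree p.1 : ℝ)⁻¹ * |∑ j ∈ G.neighborFinset p.1, w j p.2|
          ≤ (G.degree p.1 : ℝ)⁻¹ * ((G.degree p.1 : ℝ) * M) := by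
            apply mul_le_mul_of_nonneg_left h2
            positivity
        _ = M := inv_mul_cancel_left₀ (hdeg' p.1) M
    have habs : |mu| ≤ 1 := by
      by_contra hcon
      push_neg at hcon
      nlinarith
    exact le_trans (le_abs_self mu) habs
end

section
/- Let h_1,...,h_N, ĥ_1,...,ĥ_N ∈ O(3), Q = (1/N) Σ_{i=1}^N ĥ_i h_i^T with singular values σ_1, σ_2, σ_3. Then min_{O ∈ O(3)} (1/N) Σ_{i=1}^N ‖h_i − O ĥ_i‖_F^2 = 6 − 2(σ_1 + σ_2 + σ_3). In particular, if Q ∈ O(3) then the minimum is 0. -/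
open Matrix BigOperators

private lemma sq_sum_trace (M : Matrix (Fin 3) (Fin 3) ℝ) :
    ∑ a, ∑ b, M a b ^ 2 = (Mᵀ * M).trace := by
  simp only [Matrix.trace, Matrix.diag, Matrix.mul_apply, Matrix.transpose_apply, sq]
  exact Finset.sum_comm

private lemma cost_eq (N : ℕ) (hN : 0 < N)
    (h hhat : Fin N → Matrix (Fin 3) (Fin 3) ℝ)
    (horth : ∀ i, (h i)ᵀ * h i = 1)
    (hhatorth : ∀ i, (hhat i)ᵀ * hhat i = 1)
    (Q : Matrix (Fin 3) (Fin 3) ℝ)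
    (hQ : Q = (N : ℝ)⁻¹ • ∑ i, hhat i * (h i)ᵀ)
    (O : Matrix (Fin 3) (Fin 3) ℝ) (hO : Oᵀ * O = 1) :
    (N : ℝ)⁻¹ * ∑ i, (∑ a, ∑ b, (h i - O * hhat i) a b ^ 2)
      = 6 - 2 * (O * Q).trace := by
  have key : ∀ i, (∑ a, ∑ b, (h i - O * hhat i) a b ^ 2)
      = 6 - 2 * (O * (hhat i * (h i)ᵀ)).trace := by
    intro i
    rw [sq_sum_trace]
    have hexp : (h i - O * hhat i)ᵀ * (h i - O * hhat i)
        = (h i)ᵀ * h i - (h i)ᵀ * (O * hhat i) - (O * hhat i)ᵀ * h i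
          + (hhat i)ᵀ * (Oᵀ * O) * hhat i := by
      simp only [Matrix.transpose_sub, Matrix.transpose_mul]
      noncomm_ring
    rw [hexp, hO, horth i, Matrix.mul_one, hhatorth i]
    have h1 : ((h i)ᵀ * (O * hhat i)).trace = (O * (hhat i * (h i)ᵀ)).trace := by
      rw [Matrix.trace_mul_comm, Matrix.mul_assoc]
    have h2 : ((O * hhat i)ᵀ * h i).trace = (O * (hhat i * (h i)ᵀ)).trace := by
      rw [← Matrix.trace_transpose ((O * hhat i)ᵀ * h i)]
      simp only [Matrix.transpose_mul, Matrix.transpose_transpose]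
      rw [Matrix.trace_mul_comm, Matrix.mul_assoc]
    simp only [Matrix.trace_add, Matrix.trace_sub, Matrix.trace_one, h1, h2]
    norm_num
    ring
  have hsum : ∑ i, (∑ a, ∑ b, (h i - O * hhat i) a b ^ 2)
      = 6 * N - 2 * (O * ∑ i, hhat i * (h i)ᵀ).trace := by
    rw [Finset.sum_congr rfl (fun i _ => key i), Finset.sum_sub_distrib,
      Matrix.mul_sum, Matrix.trace_sum, Finset.mul_sum]
    simp [Finset.sum_const, mul_comm]
  rw [hsum, hQ]
  have hNne : (N : ℝ) ≠ 0 := Nat.cast_ne_zero.mpr hN.ne'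
  rw [Matrix.mul_smul, Matrix.trace_smul]
  rw [smul_eq_mul]
  field_simp

/-- For `h_i, ĥ_i ∈ O(3)` and `Q = (1/N) Σ_i ĥ_i h_iᵀ` with singular values
`σ₁,σ₂,σ₃` (from an SVD `Q = U diag(σ) Vᵀ`), the minimum over `O ∈ O(3)` of
`(1/N) Σ_i ‖h_i − O ĥ_i‖_F²` equals `6 − 2(σ₁+σ₂+σ₃)`; in particular if `Q ∈ O(3)` the
minimum is 0. -/
theorem stmt_9 (N : ℕ) (hN : 0 < N)
    (h hhat : Fin N → Matrix (Fin 3) (Fin 3) ℝ)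
    (horth : ∀ i, (h i)ᵀ * h i = 1)
    (hhatorth : ∀ i, (hhat i)ᵀ * hhat i = 1)
    (Q U V : Matrix (Fin 3) (Fin 3) ℝ) (σ : Fin 3 → ℝ)
    (hQ : Q = (N : ℝ)⁻¹ • ∑ i, hhat i * (h i)ᵀ)
    (hU : Uᵀ * U = 1) (hV : Vᵀ * V = 1) (hσ : ∀ i, 0 ≤ σ i)
    (hSVD : Q = U * Matrix.diagonal σ * Vᵀ) :
    IsLeast {y : ℝ | ∃ O : Matrix (Fin 3) (Fin 3) ℝ, Oᵀ * O = 1 ∧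
        y = (N : ℝ)⁻¹ * ∑ i, (∑ a, ∑ b, (h i - O * hhat i) a b ^ 2)}
      (6 - 2 * (σ 0 + σ 1 + σ 2))
    ∧ (Qᵀ * Q = 1 → 6 - 2 * (σ 0 + σ 1 + σ 2) = 0) := by
  have hUU : U * Uᵀ = 1 := mul_eq_one_comm.mp hU
  have hVV : V * Vᵀ = 1 := mul_eq_one_comm.mp hV
  have hO0 : (V * Uᵀ)ᵀ * (V * Uᵀ) = 1 := by
    calc (V * Uᵀ)ᵀ * (V * Uᵀ) = U * (Vᵀ * V) * Uᵀ := by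
          simp only [Matrix.transpose_mul, Matrix.transpose_transpose]; noncomm_ring
      _ = 1 := by rw [hV, Matrix.mul_one, hUU]
  constructor
  · constructor
    · -- membership with O = V * Uᵀ
      refine ⟨V * Uᵀ, hO0, ?_⟩
      rw [cost_eq N hN h hhat horth hhatorth Q hQ _ hO0]
      have htr : ((V * Uᵀ) * Q).trace = σ 0 + σ 1 + σ 2 := by
        have : (V * Uᵀ) * Q = V * Matrix.diagonal σ * Vᵀ := by
          rw [hSVD]
          calc V * Uᵀ * (U * Matrix.diagonal σ * Vᵀ)
              = V * (Uᵀ * U) * Matrix.diagonal σ * Vᵀ := by noncomm_ring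
            _ = V * Matrix.diagonal σ * Vᵀ := by rw [hU, Matrix.mul_one]
        rw [this, Matrix.trace_mul_comm, ← Matrix.mul_assoc, hV, Matrix.one_mul,
          Matrix.trace_diagonal, Fin.sum_univ_three]
      rw [htr]
    · -- lower bound
      rintro y ⟨O, hO, rfl⟩
      rw [cost_eq N hN h hhat horth hhatorth Q hQ O hO]
      have hOO : O * Oᵀ = 1 := mul_eq_one_comm.mp hO
      set W := Vᵀ * O * U with hW
      have hWW : Wᵀ * W = 1 := by
        have : Wᵀ * W = Uᵀ * (Oᵀ * (V * Vᵀ) * O) * U := by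
          rw [hW]; simp only [Matrix.transpose_mul, Matrix.transpose_transpose]; noncomm_ring
        rw [this, hVV, Matrix.mul_one, hO, Matrix.mul_one, hU]
      have hWle : ∀ i : Fin 3, W i i ≤ 1 := by
        intro i
        have h1 : ∑ a, W a i * W a i = 1 := by
          have := congrFun (congrFun hWW i) i
          simpa [Matrix.mul_apply, Matrix.one_apply_eq] using this
        have h2 : W i i * W i i ≤ ∑ a, W a i * W a i :=
          Finset.single_le_sum (fun a _ => mul_self_nonneg (W a i)) (Finset.mem_univ i)
        nlinarith [h2, h1]
      have htr : (O * Q).trace = ∑ i, W i i * σ i := by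
        have hid : O * Q = V * (W * Matrix.diagonal σ) * Vᵀ := by
          rw [hSVD, hW]
          calc O * (U * Matrix.diagonal σ * Vᵀ)
              = (V * Vᵀ) * O * (U * Matrix.diagonal σ * Vᵀ) := by
                rw [hVV, Matrix.one_mul]
            _ = V * (Vᵀ * O * U * Matrix.diagonal σ) * Vᵀ := by noncomm_ring
        rw [hid, Matrix.trace_mul_comm, ← Matrix.mul_assoc, hV, Matrix.one_mul]
        simp [Matrix.trace, Matrix.diag, Matrix.mul_diagonal]
      have hle : (O * Q).trace ≤ σ 0 + σ 1 + σ 2 := by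
        rw [htr]
        calc ∑ i, W i i * σ i ≤ ∑ i, σ i :=
              Finset.sum_le_sum (fun i _ => by
                nlinarith [hWle i, hσ i])
          _ = σ 0 + σ 1 + σ 2 := Fin.sum_univ_three σ
      linarith
  · -- if Q is orthogonal the minimum is 0
    intro hQorth
    have hD : Matrix.diagonal (fun i => σ i * σ i) = (1 : Matrix (Fin 3) (Fin 3) ℝ) := by
      have h1 : V * Matrix.diagonal (fun i => σ i * σ i) * Vᵀ = 1 := by
        have : Qᵀ * Q = V * Matrix.diagonal (fun i => σ i * σ i) * Vᵀ := by
          rw [hSVD]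
          simp only [Matrix.transpose_mul, Matrix.transpose_transpose,
            Matrix.diagonal_transpose]
          calc V * (Matrix.diagonal σ * Uᵀ) * (U * Matrix.diagonal σ * Vᵀ)
              = V * (Matrix.diagonal σ * (Uᵀ * U) * Matrix.diagonal σ) * Vᵀ := by
                noncomm_ring
            _ = V * Matrix.diagonal (fun i => σ i * σ i) * Vᵀ := by
                rw [hU, Matrix.mul_one, Matrix.diagonal_mul_diagonal]
        rw [← this, hQorth]
      calc Matrix.diagonal (fun i => σ i * σ i)
          = (Vᵀ * V) * Matrix.diagonal (fun i => σ i * σ i) * (Vᵀ * V) := by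
            rw [hV, Matrix.one_mul, Matrix.mul_one]
        _ = Vᵀ * (V * Matrix.diagonal (fun i => σ i * σ i) * Vᵀ) * V := by noncomm_ring
        _ = 1 := by rw [h1, Matrix.mul_one, hV]
    have hσ1 : ∀ i : Fin 3, σ i = 1 := by
      intro i
      have := congrFun (congrFun hD i) i
      simp [Matrix.diagonal_apply_eq, Matrix.one_apply_eq] at this
      nlinarith [hσ i, this]
    rw [hσ1 0, hσ1 1, hσ1 2]; norm_num
end
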